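/- arXiv:1103.2213 — 5 statements merged into one kernel-verified Lean document; each statement's English description precedes it below -/
import Mathlib

section
/- For β > 0 and x ∈ ℝⁿ, the proximity operator of β f₁ (the scaled Poisson negative log-likelihood with counts y, yᵢ ≥ 0) is given coordinate-wise by (prox_{βf₁} x)ᵢ = (xᵢ − β + √((xᵢ − β)² + 4βyᵢ))/2. -/
/-- The scalar Poisson data-fidelity term with count `a ≥ 0`. -/
noncomputable def fPoisson (a t : ℝ) : EReal :=
  if 0 < a then (if 0 < t then ((-a * Real.log t + t : ℝ) : EReal) else ⊤)
  else (if 0 ≤ t then ((t : ℝ) : EReal) else ⊤)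

noncomputable def fRealP (a t : ℝ) : ℝ := if 0 < a then -a * Real.log t + t else t
def admP (a t : ℝ) : Prop := if 0 < a then 0 < t else 0 ≤ t

lemma fPoisson_eq {a t : ℝ} (h : admP a t) : fPoisson a t = ((fRealP a t : ℝ) : EReal) := by
  unfold admP fPoisson fRealP at *
  split_ifs at h ⊢ <;> simp_all

lemma fPoisson_top {a t : ℝ} (h : ¬ admP a t) : fPoisson a t = ⊤ := by
  unfold admP fPoisson at *
  split_ifs at h ⊢ <;> simp_all

lemma fPoisson_ne_bot (a t : ℝ) : fPoisson a t ≠ ⊥ := by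
  unfold fPoisson
  split_ifs
  · exact EReal.coe_ne_bot _
  · simp
  · exact EReal.coe_ne_bot _
  · simp

lemma sum_fPoisson_ne_bot {ι : Type*} [DecidableEq ι] (s : Finset ι) (a t : ι → ℝ) :
    ∑ j ∈ s, fPoisson (a j) (t j) ≠ ⊥ := by
  induction s using Finset.induction with
  | empty => simp
  | insert _ _ has ih =>
    rw [Finset.sum_insert has]
    intro h
    rcases EReal.add_eq_bot_iff.mp h with h' | h'
    · exact fPoisson_ne_bot _ _ h'
    · exact ih h'

lemma scalar_key' {a β x p : ℝ} (ha : 0 ≤ a) (hβ : 0 < β)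
    (hq : p ^ 2 + (β - x) * p - β * a = 0) (hadm : admP a p) (hge : x - β ≤ p)
    (t : ℝ) (ht : admP a t) :
    β * fRealP a p + (x - p) ^ 2 / 2 + (t - p) ^ 2 / 2
      ≤ β * fRealP a t + (x - t) ^ 2 / 2 := by
  unfold admP fRealP at *
  split_ifs at ht hadm ⊢ with hA
  · have hlog : Real.log t - Real.log p ≤ t / p - 1 := by
      have h := Real.log_le_sub_one_of_pos (show 0 < t / p from div_pos ht hadm)
      rwa [Real.log_div (ne_of_gt ht) (ne_of_gt hadm)] at h
    have h1 : β * a * (Real.log t - Real.log p) ≤ β * a * (t / p - 1) :=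
      mul_le_mul_of_nonneg_left hlog (by positivity)
    have h2 : β * a = p * (p + (β - x)) := by nlinarith [hq]
    have h3 : β * a * (t / p - 1) = (p + (β - x)) * (t - p) := by
      rw [h2]; field_simp
    rw [h3] at h1
    nlinarith [h1]
  · have ha0 : a = 0 := le_antisymm (not_lt.mp hA) ha
    have hfac : p * (p + (β - x)) = 0 := by nlinarith [hq]
    rcases mul_eq_zero.mp hfac with hp0 | hpe
    · rw [hp0]; rw [hp0] at hge; nlinarith
    · nlinarith

lemma pP_props {a β x : ℝ} (ha : 0 ≤ a) (hβ : 0 < β) :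
    let p := (x - β + Real.sqrt ((x - β) ^ 2 + 4 * β * a)) / 2
    p ^ 2 + (β - x) * p - β * a = 0 ∧ admP a p ∧ x - β ≤ p := by
  intro p
  have hD : (0:ℝ) ≤ (x - β) ^ 2 + 4 * β * a := by nlinarith
  have hs := Real.sq_sqrt hD
  have habs : |x - β| ≤ Real.sqrt ((x - β) ^ 2 + 4 * β * a) := by
    rw [← Real.sqrt_sq_eq_abs]
    exact Real.sqrt_le_sqrt (by nlinarith)
  have h2 : -(x - β) ≤ |x - β| := neg_le_abs _
  have h3 : (x - β) ≤ |x - β| := le_abs_self _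
  refine ⟨by show _ = _; show _ ; unfold p; nlinarith [hs], ?_, by show _ ; unfold p; linarith⟩
  unfold admP
  split_ifs with hA
  · have hlt : |x - β| < Real.sqrt ((x - β) ^ 2 + 4 * β * a) := by
      rw [← Real.sqrt_sq_eq_abs]
      exact Real.sqrt_lt_sqrt (sq_nonneg _) (by nlinarith)
    show (0:ℝ) < p; show _ ; unfold p; linarith
  · show (0:ℝ) ≤ p; show _ ; unfold p; linarith

lemma coe_sum_ereal {n : ℕ} (f : Fin n → ℝ) :
    ((∑ i, f i : ℝ) : EReal) = ∑ i, ((f i : ℝ) : EReal) :=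
  map_sum (⟨⟨Real.toEReal, EReal.coe_zero⟩, EReal.coe_add⟩ : ℝ →+ EReal) f Finset.univ

lemma norm_sq_eq {n : ℕ} (v : EuclideanSpace ℝ (Fin n)) :
    ‖v‖ ^ 2 = ∑ i, (v i) ^ 2 := by
  rw [EuclideanSpace.norm_eq, Real.sq_sqrt (by positivity)]
  simp [sq_abs]

section Main
variable {n : ℕ} (y : EuclideanSpace ℝ (Fin n)) (β : ℝ) (x : EuclideanSpace ℝ (Fin n))

/-- The real-valued objective. -/
noncomputable def objR (z : EuclideanSpace ℝ (Fin n)) : ℝ :=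
  ∑ i, (β * fRealP (y i) (z i) + (x i - z i) ^ 2 / 2)

lemma obj_eq_of_adm (z : EuclideanSpace ℝ (Fin n)) (h : ∀ i, admP (y i) (z i)) :
    (β : EReal) * (∑ i, fPoisson (y i) (z i)) + ((‖x - z‖ ^ 2 / 2 : ℝ) : EReal)
      = ((objR y β x z : ℝ) : EReal) := by
  have h1 : (∑ i, fPoisson (y i) (z i)) = ((∑ i, fRealP (y i) (z i) : ℝ) : EReal) := by
    rw [coe_sum_ereal]
    exact Finset.sum_congr rfl fun i _ => fPoisson_eq (h i)
  rw [h1, ← EReal.coe_mul, ← EReal.coe_add]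
  congr 1
  have h2 : ‖x - z‖ ^ 2 = ∑ i, (x i - z i) ^ 2 := by
    rw [norm_sq_eq]
    refine Finset.sum_congr rfl fun i _ => ?_
    simp
  rw [h2]
  unfold objR
  rw [Finset.sum_add_distrib, Finset.mul_sum, Finset.sum_div]

lemma obj_top_of_not_adm (hβ : 0 < β) (z : EuclideanSpace ℝ (Fin n)) (i : Fin n)
    (h : ¬ admP (y i) (z i)) :
    (β : EReal) * (∑ i, fPoisson (y i) (z i)) + ((‖x - z‖ ^ 2 / 2 : ℝ) : EReal) = ⊤ := by
  have hsum : (∑ j, fPoisson (y j) (z j)) = ⊤ := by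
    rw [← Finset.add_sum_erase _ _ (Finset.mem_univ i), fPoisson_top h]
    exact EReal.top_add_of_ne_bot (sum_fPoisson_ne_bot _ _ _)
  rw [hsum, EReal.mul_top_of_pos (by exact_mod_cast hβ)]
  exact EReal.top_add_of_ne_bot (by simp)

end Main

theorem prox_poisson_fidelity
    {n : ℕ} (y : EuclideanSpace ℝ (Fin n)) (hy : ∀ i, 0 ≤ y i)
    (β : ℝ) (hβ : 0 < β) (x : EuclideanSpace ℝ (Fin n)) :
    let p : EuclideanSpace ℝ (Fin n) :=
      WithLp.toLp 2 (fun i => (x i - β + Real.sqrt ((x i - β) ^ 2 + 4 * β * y i)) / 2 : Fin n → ℝ)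
    (∀ z : EuclideanSpace ℝ (Fin n),
        (β : EReal) * (∑ i, fPoisson (y i) (p i)) + ((‖x - p‖ ^ 2 / 2 : ℝ) : EReal)
          ≤ (β : EReal) * (∑ i, fPoisson (y i) (z i)) + ((‖x - z‖ ^ 2 / 2 : ℝ) : EReal))
    ∧ (∀ q : EuclideanSpace ℝ (Fin n),
        (∀ z : EuclideanSpace ℝ (Fin n),
          (β : EReal) * (∑ i, fPoisson (y i) (q i)) + ((‖x - q‖ ^ 2 / 2 : ℝ) : EReal)
            ≤ (β : EReal) * (∑ i, fPoisson (y i) (z i)) + ((‖x - z‖ ^ 2 / 2 : ℝ) : EReal))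
        → q = p) := by
  intro p
  have hpp : ∀ i, (p i) ^ 2 + (β - x i) * (p i) - β * (y i) = 0 ∧
      admP (y i) (p i) ∧ x i - β ≤ p i := fun i => pP_props (x := x i) (hy i) hβ
  have hpadm : ∀ i, admP (y i) (p i) := fun i => (hpp i).2.1
  -- key real inequality
  have hkey : ∀ z : EuclideanSpace ℝ (Fin n), (∀ i, admP (y i) (z i)) →
      objR y β x p + ∑ i, (z i - p i) ^ 2 / 2 ≤ objR y β x z := by
    intro z hz
    unfold objR
    rw [← Finset.sum_add_distrib]
    apply Finset.sum_le_sum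
    intro i _
    exact scalar_key' (hy i) hβ (hpp i).1 (hpadm i) (hpp i).2.2 (z i) (hz i)
  constructor
  · intro z
    by_cases hz : ∀ i, admP (y i) (z i)
    · rw [obj_eq_of_adm y β x p hpadm, obj_eq_of_adm y β x z hz]
      rw [EReal.coe_le_coe_iff]
      have := hkey z hz
      have hnn : (0:ℝ) ≤ ∑ i, (z i - p i) ^ 2 / 2 := by positivity
      linarith
    · push_neg at hz
      obtain ⟨i, hi⟩ := hz
      rw [obj_top_of_not_adm y β x hβ z i hi]
      exact le_top
  · intro q hq
    have hqadm : ∀ i, admP (y i) (q i) := by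
      by_contra hc
      push_neg at hc
      obtain ⟨i, hi⟩ := hc
      have h1 := hq p
      rw [obj_top_of_not_adm y β x hβ q i hi, obj_eq_of_adm y β x p hpadm] at h1
      exact (EReal.coe_ne_top _) (top_le_iff.mp h1)
    have h1 := hq p
    rw [obj_eq_of_adm y β x q hqadm, obj_eq_of_adm y β x p hpadm,
      EReal.coe_le_coe_iff] at h1
    have h2 := hkey q hqadm
    have hsum : ∑ i, (q i - p i) ^ 2 / 2 ≤ 0 := by linarith
    have hzero : ∀ i ∈ Finset.univ, (q i - p i) ^ 2 / 2 = 0 := by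
      rw [← Finset.sum_eq_zero_iff_of_nonneg (fun i _ => by positivity)]
      exact le_antisymm hsum (by positivity)
    ext i
    have := hzero i (Finset.mem_univ i)
    have : (q i - p i) ^ 2 = 0 := by linarith
    have := pow_eq_zero_iff (n := 2) (by norm_num) |>.mp this
    linarith [sub_eq_zero.mp this]
end

section
/- For the scalar function f(t) = −a log t + t on (0,∞) (+∞ elsewhere), with a > 0 and β > 0, prox_{βf}(x) = (x − β + √((x−β)² + 4βa))/2 for all x ∈ ℝ, and this value is always strictly positive. -/
/-- Key real inequality: the minimizer property with a quadratic gap. -/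
lemma prox_scalar_poisson_aux
    (a β : ℝ) (ha : 0 < a) (hβ : 0 < β) (x p : ℝ) (hp : 0 < p)
    (hquad : p ^ 2 - (x - β) * p - β * a = 0) (t : ℝ) (ht : 0 < t) :
    β * (-a * Real.log p + p) + (x - p) ^ 2 / 2 + (t - p) ^ 2 / 2
      ≤ β * (-a * Real.log t + t) + (x - t) ^ 2 / 2 := by
  have hlog : Real.log (t / p) ≤ t / p - 1 :=
    Real.log_le_sub_one_of_pos (by positivity)
  rw [Real.log_div (ne_of_gt ht) (ne_of_gt hp)] at hlog
  have h1 : β * a * (Real.log t - Real.log p) ≤ β * a * (t / p - 1) := by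
    apply mul_le_mul_of_nonneg_left hlog (by positivity)
  have h2 : t / p - 1 = (t - p) / p := by field_simp
  rw [h2] at h1
  have h3 : β * a * ((t - p) / p) = (β * a / p) * (t - p) := by ring
  have h4 : β * a / p = p - (x - β) := by
    field_simp
    nlinarith [hquad]
  nlinarith [h1, h4]

/-- For the scalar function `f(t) = −a log t + t` on `(0,∞)` (`+∞` elsewhere),
with `a > 0`, `β > 0`, the proximity operator of `βf` at `x` is
`(x − β + √((x−β)² + 4βa))/2`, and this value is strictly positive. -/
theorem prox_scalar_poisson
    (a β : ℝ) (ha : 0 < a) (hβ : 0 < β) (x : ℝ) :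
    let f : ℝ → EReal := fun t => if 0 < t then ((-a * Real.log t + t : ℝ) : EReal) else ⊤
    let p : ℝ := (x - β + Real.sqrt ((x - β) ^ 2 + 4 * β * a)) / 2
    0 < p
    ∧ (∀ t : ℝ,
        (β : EReal) * f p + (((x - p) ^ 2 / 2 : ℝ) : EReal)
          ≤ (β : EReal) * f t + (((x - t) ^ 2 / 2 : ℝ) : EReal))
    ∧ (∀ q : ℝ,
        (∀ t : ℝ,
          (β : EReal) * f q + (((x - q) ^ 2 / 2 : ℝ) : EReal)
            ≤ (β : EReal) * f t + (((x - t) ^ 2 / 2 : ℝ) : EReal))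
        → q = p) := by
  intro f p
  set s := Real.sqrt ((x - β) ^ 2 + 4 * β * a) with hs
  have hs2 : s ^ 2 = (x - β) ^ 2 + 4 * β * a := Real.sq_sqrt (by positivity)
  have habs : |x - β| < s := by
    have : Real.sqrt ((x - β) ^ 2) < s := by
      apply Real.sqrt_lt_sqrt (by positivity); nlinarith
    rwa [Real.sqrt_sq_eq_abs] at this
  have hp : 0 < p := by
    have := neg_abs_le (x - β)
    have : -(x - β) < s := lt_of_le_of_lt (by linarith [neg_abs_le (x - β)]) habs
    show 0 < (x - β + s) / 2
    linarith
  have hquad : p ^ 2 - (x - β) * p - β * a = 0 := by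
    show ((x - β + s) / 2) ^ 2 - (x - β) * ((x - β + s) / 2) - β * a = 0
    nlinarith [hs2]
  -- value of β * f at a positive point, as an EReal equation
  have hval : ∀ u : ℝ, 0 < u →
      (β : EReal) * f u + (((x - u) ^ 2 / 2 : ℝ) : EReal)
        = ((β * (-a * Real.log u + u) + (x - u) ^ 2 / 2 : ℝ) : EReal) := by
    intro u hu
    have : f u = ((-a * Real.log u + u : ℝ) : EReal) := by simp [f, hu]
    rw [this, ← EReal.coe_mul, ← EReal.coe_add]
  have hmin : ∀ t : ℝ,
      (β : EReal) * f p + (((x - p) ^ 2 / 2 : ℝ) : EReal)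
        ≤ (β : EReal) * f t + (((x - t) ^ 2 / 2 : ℝ) : EReal) := by
    intro t
    by_cases ht : 0 < t
    · rw [hval p hp, hval t ht, EReal.coe_le_coe_iff]
      have := prox_scalar_poisson_aux a β ha hβ x p hp hquad t ht
      nlinarith [sq_nonneg (t - p)]
    · have hft : f t = ⊤ := by simp [f, ht]
      rw [hft]
      have : (β : EReal) * ⊤ = ⊤ := EReal.mul_top_of_pos (by exact_mod_cast hβ)
      rw [this]
      simp [EReal.top_add_of_ne_bot]
  refine ⟨hp, hmin, ?_⟩
  intro q hq
  have hq0 : 0 < q := by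
    by_contra hq0
    have hfq : f q = ⊤ := by simp [f, hq0]
    have := hq p
    rw [hfq, hval p hp] at this
    have htop : (β : EReal) * ⊤ = ⊤ := EReal.mul_top_of_pos (by exact_mod_cast hβ)
    rw [htop] at this
    have h1 : (⊤ : EReal) + (((x - q) ^ 2 / 2 : ℝ) : EReal) = ⊤ := by
      simp [EReal.top_add_of_ne_bot]
    rw [h1] at this
    exact (EReal.coe_ne_top _) (top_le_iff.mp this)
  have h1 := hq p
  have h2 := hmin q
  rw [hval p hp, hval q hq0, EReal.coe_le_coe_iff] at h1 h2
  have h3 := prox_scalar_poisson_aux a β ha hβ x p hp hquad q hq0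
  have : (q - p) ^ 2 ≤ 0 := by nlinarith
  nlinarith [sq_nonneg (q - p)]
end

section
/- If F : ℝⁿ → ℝᵐ is a tight frame operator, i.e. F Fᵀ = c·I with c > 0, A(x) = Fx − y is an affine map, and f ∈ Γ₀(ℝᵐ), then prox_{f∘A}(x) = x + c⁻¹ Fᵀ (prox_{cf} − I)(Fx − y). -/
set_option maxHeartbeats 1000000


/-- If `F : ℝⁿ → ℝᵐ` is a tight frame (`F Fᵀ = c I`, `c > 0`),
`A x = F x − y`, and `f ∈ Γ₀(ℝᵐ)`, then
`prox_{f∘A}(x) = x + c⁻¹ Fᵀ (prox_{cf} − I)(F x − y)`.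
Here the prox of `c f` at `A x` is encoded by its minimizing property. -/
theorem prox_comp_tight_frame
    {n m : ℕ}
    (F : EuclideanSpace ℝ (Fin n) →L[ℝ] EuclideanSpace ℝ (Fin m))
    (c : ℝ) (hc : 0 < c)
    (htight : ∀ u : EuclideanSpace ℝ (Fin m),
      F (ContinuousLinearMap.adjoint F u) = c • u)
    (y : EuclideanSpace ℝ (Fin m))
    (f : EuclideanSpace ℝ (Fin m) → EReal)
    (hproper : ∃ v, f v ≠ ⊤)
    (hnotbot : ∀ v, f v ≠ ⊥)
    (hconv : ∀ u v : EuclideanSpace ℝ (Fin m), ∀ a b : ℝ, 0 ≤ a → 0 ≤ b → a + b = 1 →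
      f (a • u + b • v) ≤ (a : EReal) * f u + (b : EReal) * f v)
    (hlsc : LowerSemicontinuous f)
    (x : EuclideanSpace ℝ (Fin n))
    (q : EuclideanSpace ℝ (Fin m))
    -- `q = prox_{c·f} (F x − y)`:
    (hq : ∀ v : EuclideanSpace ℝ (Fin m),
      (c : EReal) * f q + ((‖(F x - y) - q‖ ^ 2 / 2 : ℝ) : EReal)
        ≤ (c : EReal) * f v + ((‖(F x - y) - v‖ ^ 2 / 2 : ℝ) : EReal)) :
    -- then `x + c⁻¹ Fᵀ (q − (F x − y))` is the prox of `f ∘ A` at `x`: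
    ∀ z : EuclideanSpace ℝ (Fin n),
      f (F (x + c⁻¹ • ContinuousLinearMap.adjoint F (q - (F x - y))) - y)
          + ((‖x - (x + c⁻¹ • ContinuousLinearMap.adjoint F (q - (F x - y)))‖ ^ 2 / 2 : ℝ) : EReal)
        ≤ f (F z - y) + ((‖x - z‖ ^ 2 / 2 : ℝ) : EReal) := by
  intro z
  set w : EuclideanSpace ℝ (Fin m) := q - (F x - y) with hw
  have hFadj : F (ContinuousLinearMap.adjoint F w) = c • w := htight w
  -- F p - y = q
  have hFp : F (x + c⁻¹ • ContinuousLinearMap.adjoint F w) - y = q := by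
    rw [map_add, map_smul, hFadj, smul_smul, inv_mul_cancel₀ hc.ne', one_smul, hw]
    abel
  -- ‖adj F u‖² = c ‖u‖²
  have hadjnorm : ∀ u : EuclideanSpace ℝ (Fin m),
      ‖ContinuousLinearMap.adjoint F u‖ ^ 2 = c * ‖u‖ ^ 2 := by
    intro u
    rw [← real_inner_self_eq_norm_sq, ContinuousLinearMap.adjoint_inner_left, htight,
      real_inner_smul_right, real_inner_self_eq_norm_sq]
  -- norm of x - p
  have hnormp : ‖x - (x + c⁻¹ • ContinuousLinearMap.adjoint F w)‖ ^ 2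
      = c⁻¹ * ‖(F x - y) - q‖ ^ 2 := by
    have h0 : x - (x + c⁻¹ • ContinuousLinearMap.adjoint F w)
        = -(c⁻¹ • ContinuousLinearMap.adjoint F w) := by abel
    rw [h0, norm_neg, norm_smul, mul_pow, hadjnorm]
    have : ‖(F x - y) - q‖ = ‖w‖ := by rw [hw, norm_sub_rev]
    rw [this]
    rw [Real.norm_eq_abs, abs_of_pos (inv_pos.mpr hc)]
    field_simp
  -- ‖F u‖² ≤ c ‖u‖²
  have hFle : ‖F (x - z)‖ ^ 2 ≤ c * ‖x - z‖ ^ 2 := by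
    set u := x - z
    have h1 : ‖ContinuousLinearMap.adjoint F (F u)‖ ^ 2 = c * ‖F u‖ ^ 2 := hadjnorm (F u)
    have h2 : ‖F u‖ ^ 2 = inner ℝ (ContinuousLinearMap.adjoint F (F u)) u := by
      rw [ContinuousLinearMap.adjoint_inner_left, real_inner_self_eq_norm_sq]
    have h3 : (inner ℝ (ContinuousLinearMap.adjoint F (F u)) u : ℝ)
        ≤ ‖ContinuousLinearMap.adjoint F (F u)‖ * ‖u‖ := real_inner_le_norm _ _
    have h4 : (0:ℝ) ≤ ‖F u‖ := norm_nonneg _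
    have h5 : (0:ℝ) ≤ ‖u‖ := norm_nonneg _
    have h6 : (0:ℝ) ≤ ‖ContinuousLinearMap.adjoint F (F u)‖ := norm_nonneg _
    rcases eq_or_lt_of_le h4 with h|h
    · rw [← h]
      norm_num
      positivity
    · have h7 : ‖F u‖ ^ 2 * ‖F u‖ ^ 2 ≤ c * ‖F u‖ ^ 2 * ‖u‖ ^ 2 := by
        have h8 : ‖F u‖ ^ 2 * ‖F u‖ ^ 2
            ≤ (‖ContinuousLinearMap.adjoint F (F u)‖ * ‖u‖)
              * (‖ContinuousLinearMap.adjoint F (F u)‖ * ‖u‖) := by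
          rw [h2]
          exact mul_le_mul h3 h3 (h2 ▸ sq_nonneg _) (mul_nonneg h6 h5)
        calc ‖F u‖ ^ 2 * ‖F u‖ ^ 2
            ≤ (‖ContinuousLinearMap.adjoint F (F u)‖ * ‖u‖)
              * (‖ContinuousLinearMap.adjoint F (F u)‖ * ‖u‖) := h8
          _ = ‖ContinuousLinearMap.adjoint F (F u)‖ ^ 2 * ‖u‖ ^ 2 := by ring
          _ = c * ‖F u‖ ^ 2 * ‖u‖ ^ 2 := by rw [h1]
      nlinarith [h7, mul_pos h h]
  rw [hFp, hnormp]
  -- f q is real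
  have hqtop : f q ≠ ⊤ := by
    obtain ⟨v0, hv0⟩ := hproper
    intro htop
    have := hq v0
    rw [htop, EReal.coe_mul_top_of_pos hc] at this
    have hvlt : (c : EReal) * f v0 + ((‖(F x - y) - v0‖ ^ 2 / 2 : ℝ) : EReal) < ⊤ := by
      lift f v0 to ℝ using ⟨hv0, hnotbot v0⟩ with r
      rw [← EReal.coe_mul, ← EReal.coe_add]
      exact EReal.coe_lt_top _
    have : (⊤ : EReal) ≤ (c : EReal) * f v0 + ((‖(F x - y) - v0‖ ^ 2 / 2 : ℝ) : EReal) := by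
      rw [EReal.top_add_of_ne_bot] at this
      · exact this
      · exact EReal.coe_ne_bot _
    exact hvlt.ne (top_le_iff.mp this)
  lift f q to ℝ using ⟨hqtop, hnotbot q⟩ with fq hfq
  by_cases hvt : f (F z - y) = ⊤
  · rw [hvt]
    rw [EReal.top_add_of_ne_bot (EReal.coe_ne_bot _)]
    exact le_top
  lift f (F z - y) to ℝ using ⟨hvt, hnotbot _⟩ with fv hfv
  have hq' := hq (F z - y)
  rw [← hfv] at hq'
  rw [← EReal.coe_mul, ← EReal.coe_mul, ← EReal.coe_add, ← EReal.coe_add,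
    EReal.coe_le_coe_iff] at hq'
  rw [← EReal.coe_add, ← EReal.coe_add, EReal.coe_le_coe_iff]
  have hFzy : ‖(F x - y) - (F z - y)‖ ^ 2 = ‖F (x - z)‖ ^ 2 := by
    rw [map_sub]
    congr 1
    abel
  rw [hFzy] at hq'
  nlinarith [mul_pos hc hc, inv_pos.mpr hc, mul_inv_cancel₀ hc.ne']
end

section
/- (Fenchel–Rockafellar duality for prox under affine precomposition) Let F : ℝⁿ → ℝᵐ be linear, y ∈ ℝᵐ, A(x) = Fx − y, and f ∈ Γ₀(ℝᵐ) with ri(dom f ∩ Im A) ≠ ∅. If ū minimizes u ↦ ½‖x − Fᵀu‖² + ⟨u, y⟩ + f*(u), then prox_{f∘A}(x) = x − Fᵀ ū. -/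
open scoped RealInnerProductSpace

private lemma real_le_of_forall_t (a b c : ℝ) (hc : 0 ≤ c)
    (h : ∀ t : ℝ, 0 < t → t ≤ 1 → a ≤ b + t * c) : a ≤ b := by
  by_contra hab
  push_neg at hab
  have hd : 0 < a - b := by linarith
  set t : ℝ := min 1 ((a - b) / (2 * (c + 1))) with ht
  have ht0 : 0 < t := by
    apply lt_min one_pos
    positivity
  have ht1 : t ≤ 1 := min_le_left _ _
  have h2 : t ≤ (a - b) / (2 * (c + 1)) := min_le_right _ _
  have := h t ht0 ht1
  have htc : t * c ≤ (a - b) / 2 := by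
    have : t * (c + 1) ≤ ((a - b) / (2 * (c + 1))) * (c + 1) := by
      apply mul_le_mul_of_nonneg_right h2; linarith
    rw [div_mul_eq_mul_div, mul_comm, mul_div_assoc] at this
    have h3 : (c+1) / (2*(c+1)) = 1/2 := by
      field_simp
    rw [h3] at this
    nlinarith
  linarith

/-- separation of a point below the epigraph from the epigraph -/
private lemma epi_sep {m : ℕ} (f : EuclideanSpace ℝ (Fin m) → EReal)
    (hnotbot : ∀ v, f v ≠ ⊥)
    (hconv : ∀ u v : EuclideanSpace ℝ (Fin m), ∀ a b : ℝ, 0 ≤ a → 0 ≤ b → a + b = 1 →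
      f (a • u + b • v) ≤ (a : EReal) * f u + (b : EReal) * f v)
    (hlsc : LowerSemicontinuous f)
    (v₁ : EuclideanSpace ℝ (Fin m)) (r₁ : ℝ) (h₁ : f v₁ = (r₁ : EReal))
    (w : EuclideanSpace ℝ (Fin m)) (β : ℝ) (hβ : (β : EReal) < f w) :
    ∃ (φ : EuclideanSpace ℝ (Fin m)) (a c : ℝ), 0 ≤ a ∧
      (⟪φ, w⟫ + a * β < c) ∧ ∀ v : EuclideanSpace ℝ (Fin m), ∀ ρ : ℝ,
        f v ≤ (ρ : EReal) → c < ⟪φ, v⟫ + a * ρ := by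
  classical
  set S : Set (EuclideanSpace ℝ (Fin m) × ℝ) := {q | f q.1 ≤ (q.2 : EReal)} with hS
  have hconvS : Convex ℝ S := by
    intro q1 hq1 q2 hq2 a b ha hb hab
    simp only [hS, Set.mem_setOf_eq] at hq1 hq2 ⊢
    have h1t : f q1.1 ≠ ⊤ := fun h => by simp [h] at hq1
    have h2t : f q2.1 ≠ ⊤ := fun h => by simp [h] at hq2
    set ρ1 := (f q1.1).toReal
    set ρ2 := (f q2.1).toReal
    have e1 : f q1.1 = (ρ1 : EReal) := (EReal.coe_toReal h1t (hnotbot _)).symm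
    have e2 : f q2.1 = (ρ2 : EReal) := (EReal.coe_toReal h2t (hnotbot _)).symm
    have l1 : ρ1 ≤ q1.2 := by rw [e1] at hq1; exact_mod_cast hq1
    have l2 : ρ2 ≤ q2.2 := by rw [e2] at hq2; exact_mod_cast hq2
    have hfst : (a • q1 + b • q2).1 = a • q1.1 + b • q2.1 := rfl
    have hsnd : (a • q1 + b • q2).2 = a * q1.2 + b * q2.2 := rfl
    rw [hfst, hsnd]
    calc f (a • q1.1 + b • q2.1) ≤ (a : EReal) * f q1.1 + (b : EReal) * f q2.1 :=
          hconv _ _ a b ha hb hab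
      _ = ((a * ρ1 + b * ρ2 : ℝ) : EReal) := by
          rw [e1, e2, ← EReal.coe_mul, ← EReal.coe_mul, ← EReal.coe_add]
      _ ≤ ((a * q1.2 + b * q2.2 : ℝ) : EReal) := by
          apply EReal.coe_le_coe_iff.mpr
          have := mul_le_mul_of_nonneg_left l1 ha
          have := mul_le_mul_of_nonneg_left l2 hb
          linarith
  have hclosedS : IsClosed S := by
    rw [← isOpen_compl_iff, isOpen_iff_mem_nhds]
    rintro ⟨v, s⟩ hq
    simp only [hS, Set.mem_compl_iff, Set.mem_setOf_eq, not_le] at hq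
    obtain ⟨c, hc1, hc2⟩ := EReal.lt_iff_exists_real_btwn.mp hq
    have hv : ∀ᶠ v' in nhds v, (c : EReal) < f v' := hlsc v _ hc2
    have hs : Set.Iio c ∈ nhds s := Iio_mem_nhds (by exact_mod_cast hc1)
    rw [nhds_prod_eq]
    filter_upwards [Filter.prod_mem_prod hv hs] with q' hq'
    simp only [Set.mem_prod, Set.mem_setOf_eq, Set.mem_Iio] at hq'
    simp only [Set.mem_compl_iff, hS, Set.mem_setOf_eq, not_le]
    exact lt_trans (by exact_mod_cast hq'.2) hq'.1
  have hnmem : ((w, β) : EuclideanSpace ℝ (Fin m) × ℝ) ∉ S := by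
    simp only [hS, Set.mem_setOf_eq, not_le]; exact hβ
  obtain ⟨ψ, c, hψ1, hψ2⟩ := geometric_hahn_banach_point_closed hconvS hclosedS hnmem
  set a : ℝ := ψ (0, 1) with ha_def
  set L : EuclideanSpace ℝ (Fin m) →L[ℝ] ℝ := ψ.comp (ContinuousLinearMap.inl ℝ (EuclideanSpace ℝ (Fin m)) ℝ) with hL
  set φ : EuclideanSpace ℝ (Fin m) := (InnerProductSpace.toDual ℝ (EuclideanSpace ℝ (Fin m))).symm L with hφ
  have hφv : ∀ v : EuclideanSpace ℝ (Fin m), ⟪φ, v⟫ = ψ (v, 0) := by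
    intro v
    rw [hφ, InnerProductSpace.toDual_symm_apply]
    rfl
  have hψval : ∀ (v : EuclideanSpace ℝ (Fin m)) (s : ℝ), ψ (v, s) = ⟪φ, v⟫ + a * s := by
    intro v s
    have : ((v, s) : EuclideanSpace ℝ (Fin m) × ℝ) = (v, 0) + s • ((0 : EuclideanSpace ℝ (Fin m)), (1 : ℝ)) := by
      simp [Prod.ext_iff]
    rw [this, map_add, map_smul, hφv, ha_def]
    simp [mul_comm]
  have hmemS : ∀ (v : EuclideanSpace ℝ (Fin m)) (ρ : ℝ), f v ≤ (ρ : EReal) → ((v, ρ) : EuclideanSpace ℝ (Fin m) × ℝ) ∈ S := by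
    intro v ρ h; exact h
  have ha : 0 ≤ a := by
    by_contra hlt
    push_neg at hlt
    set P := (⟪φ, v₁⟫ : ℝ)
    have h0 : c < P + a * r₁ := by
      have := hψ2 _ (hmemS v₁ r₁ h₁.le)
      rwa [hψval] at this
    set k : ℝ := (c - P - a * r₁) / a with hk
    have hk0 : 0 < k := div_pos_of_neg_of_neg (by linarith) hlt
    have hmem : ((v₁, r₁ + k) : EuclideanSpace ℝ (Fin m) × ℝ) ∈ S := by
      apply hmemS
      rw [h₁]
      exact_mod_cast (by linarith : r₁ ≤ r₁ + k)
    have h1 : c < P + a * (r₁ + k) := by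
      have := hψ2 _ hmem
      rwa [hψval] at this
    have hane : a ≠ 0 := ne_of_lt hlt
    have hak : a * k = c - P - a * r₁ := by
      rw [hk]; field_simp
    nlinarith
  refine ⟨φ, a, c, ha, ?_, ?_⟩
  · have := hψ1
    rwa [hψval] at this
  · intro v ρ h
    have := hψ2 _ (hmemS v ρ h)
    rwa [hψval] at this



set_option maxHeartbeats 1000000 in
/-- Fenchel–Rockafellar duality for prox under affine precomposition.
With `A x = F x − y`, `f ∈ Γ₀(ℝᵐ)` and `ri(dom f ∩ Im A) ≠ ∅`, if `ū` minimizes the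
dual objective `u ↦ ½‖x − Fᵀu‖² + ⟨u, y⟩ + f*(u)`, then `prox_{f∘A}(x) = x − Fᵀ ū`. -/
theorem prox_comp_affine_duality
    {n m : ℕ}
    (F : EuclideanSpace ℝ (Fin n) →L[ℝ] EuclideanSpace ℝ (Fin m))
    (y : EuclideanSpace ℝ (Fin m))
    (f : EuclideanSpace ℝ (Fin m) → EReal)
    (hproper : ∃ v, f v ≠ ⊤)
    (hnotbot : ∀ v, f v ≠ ⊥)
    (hconv : ∀ u v : EuclideanSpace ℝ (Fin m), ∀ a b : ℝ, 0 ≤ a → 0 ≤ b → a + b = 1 →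
      f (a • u + b • v) ≤ (a : EReal) * f u + (b : EReal) * f v)
    (hlsc : LowerSemicontinuous f)
    -- qualification condition: ri(dom f ∩ Im A) ≠ ∅
    (hqual : (intrinsicInterior ℝ
      ({v | f v ≠ ⊤} ∩ Set.range (fun x : EuclideanSpace ℝ (Fin n) => F x - y))).Nonempty)
    (fstar : EuclideanSpace ℝ (Fin m) → EReal)
    (hfstar : ∀ u, fstar u = ⨆ w : EuclideanSpace ℝ (Fin m), (((⟪u, w⟫ : ℝ)) : EReal) - f w)
    (x : EuclideanSpace ℝ (Fin n))
    (ubar : EuclideanSpace ℝ (Fin m))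
    -- `ū` minimizes the dual objective:
    (hubar : ∀ u : EuclideanSpace ℝ (Fin m),
      ((‖x - ContinuousLinearMap.adjoint F ubar‖ ^ 2 / 2 + ⟪ubar, y⟫ : ℝ) : EReal) + fstar ubar
        ≤ ((‖x - ContinuousLinearMap.adjoint F u‖ ^ 2 / 2 + ⟪u, y⟫ : ℝ) : EReal) + fstar u) :
    -- then `x − Fᵀ ū = prox_{f ∘ A}(x)`:
    ∀ p : EuclideanSpace ℝ (Fin n),
      f (F (x - ContinuousLinearMap.adjoint F ubar) - y)
          + ((‖x - (x - ContinuousLinearMap.adjoint F ubar)‖ ^ 2 / 2 : ℝ) : EReal)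
        ≤ f (F p - y) + ((‖x - p‖ ^ 2 / 2 : ℝ) : EReal) := by
  intro p
  set Ft := ContinuousLinearMap.adjoint F with hFt
  set pbar := x - Ft ubar with hpbar
  set w := F pbar - y with hw
  obtain ⟨v₁, hv₁⟩ := hproper
  set r₁ := (f v₁).toReal with hr₁
  have hfv₁ : f v₁ = (r₁ : EReal) := (EReal.coe_toReal hv₁ (hnotbot _)).symm
  -- fstar is never ⊥
  have hfs_bot : ∀ u, ((⟪u, v₁⟫ - r₁ : ℝ) : EReal) ≤ fstar u := by
    intro u
    rw [hfstar]
    have := le_iSup (fun v => ((⟪u, v⟫ : ℝ) : EReal) - f v) v₁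
    rwa [hfv₁, ← EReal.coe_sub] at this
  -- a reusable conjugate bound from a separating hyperplane with positive vertical component
  have hconj_bound : ∀ (φ : EuclideanSpace ℝ (Fin m)) (a c : ℝ), 0 < a →
      (∀ v : EuclideanSpace ℝ (Fin m), ∀ ρ : ℝ, f v ≤ (ρ : EReal) → c < ⟪φ, v⟫ + a * ρ) →
      fstar ((-(1/a)) • φ) ≤ ((-c/a : ℝ) : EReal) := by
    intro φ a c hapos hgt
    have hane : a ≠ 0 := ne_of_gt hapos
    rw [hfstar]
    apply iSup_le
    intro v
    by_cases hv : f v = ⊤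
    · simp [hv]
    · have hfv : f v = (((f v).toReal : ℝ) : EReal) := (EReal.coe_toReal hv (hnotbot _)).symm
      set ρ := (f v).toReal with hρ
      rw [hfv, ← EReal.coe_sub, EReal.coe_le_coe_iff]
      have h := hgt v ρ hfv.le
      rw [real_inner_smul_left]
      rw [le_div_iff₀ hapos]
      have h1 : -(1/a) * ⟪φ, v⟫ * a = -⟪φ, v⟫ := by field_simp
      nlinarith [h]
  -- existence of an affine minorant: fstar is somewhere finite
  have hmin : ∃ (u₀ : EuclideanSpace ℝ (Fin m)) (r₀ : ℝ), fstar u₀ ≤ (r₀ : EReal) := by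
    obtain ⟨φ, a, c, ha, hlt, hgt⟩ := epi_sep f hnotbot hconv hlsc v₁ r₁ hfv₁ v₁ (r₁ - 1)
      (by rw [hfv₁]; exact_mod_cast (by linarith : r₁ - 1 < r₁))
    have hapos : 0 < a := by
      rcases lt_or_eq_of_le ha with h | h
      · exact h
      · exfalso
        have h2 := hgt v₁ r₁ hfv₁.le
        rw [← h] at hlt h2
        simp only [zero_mul, add_zero] at hlt h2
        linarith
    exact ⟨(-(1/a)) • φ, -c/a, hconj_bound φ a c hapos hgt⟩
  obtain ⟨u₀, r₀, hu₀⟩ := hmin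
  -- fstar ubar is finite
  have hsub_top : fstar ubar ≠ ⊤ := by
    intro htop
    have h := hubar u₀
    rw [htop, EReal.add_top_of_ne_bot (EReal.coe_ne_bot _)] at h
    have h2 : ((‖x - Ft u₀‖ ^ 2 / 2 + ⟪u₀, y⟫ : ℝ) : EReal) + fstar u₀
        ≤ ((‖x - Ft u₀‖ ^ 2 / 2 + ⟪u₀, y⟫ + r₀ : ℝ) : EReal) := by
      rw [EReal.coe_add (‖x - Ft u₀‖ ^ 2 / 2 + ⟪u₀, y⟫) r₀]
      exact add_le_add_right hu₀ _
    have := (top_le_iff.mp (le_trans h h2))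
    exact EReal.coe_ne_top _ this
  have hfs_ubar_ne_bot : fstar ubar ≠ ⊥ := by
    intro hbot
    have := hfs_bot ubar
    rw [hbot] at this
    exact (EReal.coe_ne_bot _) (le_bot_iff.mp this)
  set s := (fstar ubar).toReal with hs_def
  have hs : fstar ubar = (s : EReal) := (EReal.coe_toReal hsub_top hfs_ubar_ne_bot).symm
  -- Fenchel–Young inequality at ubar
  have hFY : ∀ (v : EuclideanSpace ℝ (Fin m)) (ρ : ℝ), f v = (ρ : EReal) →
      ⟪ubar, v⟫ - ρ ≤ s := by
    intro v ρ hv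
    have := le_iSup (fun v' => ((⟪ubar, v'⟫ : ℝ) : EReal) - f v') v
    rw [← hfstar, hs] at this
    simp only [hv, ← EReal.coe_sub] at this
    exact_mod_cast this
  -- key subgradient inequality for the dual optimum
  have hsub : ∀ (u : EuclideanSpace ℝ (Fin m)) (r : ℝ), fstar u ≤ (r : EReal) →
      s + ⟪w, u - ubar⟫ ≤ r := by
    intro u r hur
    set d := Ft (u - ubar) with hd
    apply real_le_of_forall_t _ _ (‖d‖ ^ 2 / 2) (by positivity)
    intro t ht0 ht1
    set ut := ubar + t • (u - ubar) with hut
    have hconv' : fstar ut ≤ (((1-t)*s + t*r : ℝ) : EReal) := by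
      rw [hfstar]
      apply iSup_le
      intro v
      by_cases hv : f v = ⊤
      · simp [hv]
      · have hfv : f v = (((f v).toReal : ℝ) : EReal) := (EReal.coe_toReal hv (hnotbot _)).symm
        set ρ := (f v).toReal with hρ
        have h1 : ⟪ubar, v⟫ - ρ ≤ s := hFY v ρ hfv
        have h2 : ⟪u, v⟫ - ρ ≤ r := by
          have := le_iSup (fun v' => ((⟪u, v'⟫ : ℝ) : EReal) - f v') v
          rw [← hfstar] at this
          have h3 := le_trans this hur
          rw [hfv, ← EReal.coe_sub] at h3
          exact_mod_cast h3
        rw [hfv, ← EReal.coe_sub, EReal.coe_le_coe_iff]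
        have hinner : ⟪ut, v⟫ = (1-t) * ⟪ubar, v⟫ + t * ⟪u, v⟫ := by
          rw [hut]
          simp only [inner_add_left, inner_sub_left, real_inner_smul_left]
          ring
        rw [hinner]
        have e1 := mul_le_mul_of_nonneg_left h1 (by linarith : (0:ℝ) ≤ 1 - t)
        have e2 := mul_le_mul_of_nonneg_left h2 ht0.le
        linarith [e1, e2]
    have hkey := le_trans (hubar ut) (add_le_add_right hconv' _)
    rw [hs, ← EReal.coe_add, ← EReal.coe_add] at hkey
    have hkeyR : ‖x - Ft ubar‖ ^ 2 / 2 + ⟪ubar, y⟫ + s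
        ≤ ‖x - Ft ut‖ ^ 2 / 2 + ⟪ut, y⟫ + ((1-t)*s + t*r) := EReal.coe_le_coe_iff.mp hkey
    have hFtut : Ft ut = Ft ubar + t • d := by
      rw [hut, hd, map_add, map_smul]
    have hre : x - Ft ut = (x - Ft ubar) - t • d := by
      rw [hFtut]; abel
    have hexp : ‖x - Ft ut‖ ^ 2
        = ‖x - Ft ubar‖ ^ 2 - 2 * (t * ⟪x - Ft ubar, d⟫) + t ^ 2 * ‖d‖ ^ 2 := by
      rw [hre, norm_sub_sq_real, real_inner_smul_right, norm_smul]
      simp [abs_of_pos ht0, mul_pow]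
    have hinner_y : ⟪ut, y⟫ = ⟪ubar, y⟫ + t * ⟪u - ubar, y⟫ := by
      rw [hut]
      simp only [inner_add_left, real_inner_smul_left]
    have hwid : ⟪w, u - ubar⟫ = ⟪x - Ft ubar, d⟫ - ⟪u - ubar, y⟫ := by
      rw [hw, hd, ContinuousLinearMap.adjoint_inner_right, hpbar]
      rw [inner_sub_left]
      rw [real_inner_comm (u - ubar) y]
    rw [hexp, hinner_y] at hkeyR
    rw [hwid]
    have hA : t * (s + (⟪x - Ft ubar, d⟫ - ⟪u - ubar, y⟫)) ≤ t * (r + t * (‖d‖ ^ 2 / 2)) := by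
      linarith [hkeyR]
    exact le_of_mul_le_mul_left hA ht0
  -- Fenchel–Moreau at w
  set β := ⟪ubar, w⟫ - s with hβdef
  have hFM : f w ≤ (β : EReal) := by
    by_contra hgt'
    push_neg at hgt'
    obtain ⟨φ, a, c, ha, hlt, hgtS⟩ := epi_sep f hnotbot hconv hlsc v₁ r₁ hfv₁ w β hgt'
    rcases lt_or_eq_of_le ha with hapos | ha0
    · -- a > 0
      have hane : a ≠ 0 := ne_of_gt hapos
      have hfsu₁ := hconj_bound φ a c hapos hgtS
      have h1 := hsub _ _ hfsu₁
      rw [inner_sub_right, real_inner_smul_right] at h1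
      have h1' := mul_le_mul_of_nonneg_left h1 hapos.le
      have he1 : a * (s + (-(1/a) * ⟪w, φ⟫ - ⟪w, ubar⟫)) = a * s - ⟪w, φ⟫ - a * ⟪w, ubar⟫ := by
        field_simp; ring
      have he2 : a * (-c/a) = -c := by rw [mul_comm, div_mul_cancel₀ _ hane]
      rw [he1, he2] at h1'
      rw [hβdef, real_inner_comm w ubar, real_inner_comm w φ] at hlt
      linarith [hlt, h1']
    · -- a = 0
      rw [← ha0] at hlt hgtS
      simp only [zero_mul, add_zero] at hlt hgtS
      have hfsu₂ : fstar (ubar - φ) ≤ ((s - c : ℝ) : EReal) := by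
        rw [hfstar]
        apply iSup_le
        intro v
        by_cases hv : f v = ⊤
        · simp [hv]
        · have hfv : f v = (((f v).toReal : ℝ) : EReal) := (EReal.coe_toReal hv (hnotbot _)).symm
          set ρ := (f v).toReal with hρ
          have h1 : ⟪ubar, v⟫ - ρ ≤ s := hFY v ρ hfv
          have h2 := hgtS v ρ hfv.le
          rw [hfv, ← EReal.coe_sub, EReal.coe_le_coe_iff, inner_sub_left]
          linarith
      have h1 := hsub _ _ hfsu₂
      have he : (ubar - φ) - ubar = -φ := by abel
      rw [he, inner_neg_right, ← real_inner_comm w φ] at h1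
      linarith
  -- final assembly
  by_cases hp : f (F p - y) = ⊤
  · rw [hp, EReal.top_add_of_ne_bot (EReal.coe_ne_bot _)]
    exact le_top
  · have hfp : f (F p - y) = (((f (F p - y)).toReal : ℝ) : EReal) :=
      (EReal.coe_toReal hp (hnotbot _)).symm
    set ρ := (f (F p - y)).toReal with hρ
    have hfyp : ⟪ubar, F p - y⟫ - ρ ≤ s := hFY _ _ hfp
    have hfw_ne_top : f w ≠ ⊤ := by
      intro h
      rw [h, top_le_iff] at hFM
      exact EReal.coe_ne_top _ hFM
    have hfwγ : f w = (((f w).toReal : ℝ) : EReal) := (EReal.coe_toReal hfw_ne_top (hnotbot _)).symm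
    set γ := (f w).toReal with hγ
    have hγβ : γ ≤ β := by
      rw [hfwγ] at hFM
      exact_mod_cast hFM
    rw [hfwγ, hfp, ← EReal.coe_add, ← EReal.coe_add, EReal.coe_le_coe_iff]
    have hxp : x - pbar = Ft ubar := sub_sub_cancel _ _
    rw [hxp]
    have hid : ⟪ubar, w⟫ - ⟪ubar, F p - y⟫ = ⟪Ft ubar, pbar - p⟫ := by
      rw [hw, ContinuousLinearMap.adjoint_inner_left, hpbar]
      simp only [map_sub, inner_sub_right]
      ring
    have hxpe : x - p = Ft ubar + (pbar - p) := by rw [hpbar]; abel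
    have hnorm : ‖x - p‖ ^ 2 = ‖Ft ubar‖ ^ 2 + 2 * ⟪Ft ubar, pbar - p⟫ + ‖pbar - p‖ ^ 2 := by
      rw [hxpe, norm_add_sq_real]
    nlinarith [sq_nonneg ‖pbar - p‖, hγβ, hfyp, hid, hnorm]
end

section
/- Let ψ : ℝ → ℝ be convex, even, nonnegative, nondecreasing on [0,∞), with ψ(0)=0 and right derivative ψ'₊(0) > 0 at 0. Then for γ > 0 and α ∈ ℝ: prox_{γψ}(α) = 0 if |α| ≤ γψ'₊(0), and otherwise prox_{γψ}(α) = α − γψ'(p) where p = prox_{γψ}(α) is nonzero with the same sign as α (assuming ψ differentiable on ℝ∖{0}). -/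
/-- For a convex, even, nonnegative penalty `ψ`, nondecreasing on `[0,∞)`,
with `ψ(0) = 0`, differentiable away from `0`, and positive right derivative
`d = ψ'₊(0) > 0` at `0`: the prox `p = prox_{γψ}(α)` satisfies `p = 0` when
`|α| ≤ γd`, and otherwise `p ≠ 0`, has the same sign as `α`, and
`p = α − γ ψ'(p)`. -/
theorem prox_sparsity_penalty_thresholding
    (ψ : ℝ → ℝ) (ψ' : ℝ → ℝ) (d : ℝ)
    (hconv : ConvexOn ℝ Set.univ ψ)
    (heven : ∀ t, ψ (-t) = ψ t)
    (hnonneg : ∀ t, 0 ≤ ψ t)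
    (hmono : MonotoneOn ψ (Set.Ici (0 : ℝ)))
    (hzero : ψ 0 = 0)
    (hcont : Continuous ψ)
    (hdiff : ∀ t : ℝ, t ≠ 0 → HasDerivAt ψ (ψ' t) t)
    (hd : Filter.Tendsto (fun h : ℝ => ψ h / h) (nhdsWithin 0 (Set.Ioi 0)) (nhds d))
    (hdpos : 0 < d)
    (γ : ℝ) (hγ : 0 < γ)
    (α p : ℝ)
    -- `p = prox_{γψ}(α)`:
    (hp : ∀ t : ℝ, γ * ψ p + (α - p) ^ 2 / 2 ≤ γ * ψ t + (α - t) ^ 2 / 2) :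
    (|α| ≤ γ * d → p = 0)
    ∧ (γ * d < |α| →
        p ≠ 0 ∧ (0 < α → 0 < p) ∧ (α < 0 → p < 0) ∧ p = α - γ * ψ' p) := by
  -- linear lower bound: ψ s ≥ d * s for s > 0
  have hlin : ∀ s : ℝ, 0 < s → d * s ≤ ψ s := by
    intro s hs
    have key : d ≤ ψ s / s := by
      refine le_of_tendsto hd ?_
      filter_upwards [Ioo_mem_nhdsGT_of_mem (Set.left_mem_Ico.2 hs)] with h hh
      have := hconv.secant_mono (a := 0) (x := h) (y := s) (Set.mem_univ _)
        (Set.mem_univ _) (Set.mem_univ _) (ne_of_gt hh.1) (ne_of_gt hs) hh.2.le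
      simpa [hzero] using this
    calc d * s ≤ (ψ s / s) * s := by nlinarith
    _ = ψ s := by field_simp
  have habs : ∀ t : ℝ, d * |t| ≤ ψ t := by
    intro t
    rcases lt_trichotomy t 0 with h | h | h
    · have := hlin (-t) (by linarith)
      rw [heven] at this
      rwa [abs_of_neg h]
    · simp [h, hzero]
    · rw [abs_of_pos h]; exact hlin t h
  constructor
  · -- |α| ≤ γ d → p = 0
    intro hle
    have h0 := hp 0
    have h1 : γ * (d * |p|) ≤ γ * ψ p := by nlinarith [habs p]
    have h2 : |α| * |p| ≤ γ * d * |p| := by nlinarith [abs_nonneg p]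
    have h3 : α * p ≤ |α| * |p| := by
      calc α * p ≤ |α * p| := le_abs_self _
      _ = |α| * |p| := abs_mul _ _
    have hpsq : p ^ 2 ≤ 0 := by nlinarith [hp 0]
    have := sq_nonneg p
    nlinarith [sq_abs p]
  · intro hgt
    -- p ≠ 0
    have hne : p ≠ 0 := by
      intro hp0
      subst hp0
      -- for s > 0, γ ψ s ≥ |α| s - s²/2
      have key : ∀ s : ℝ, 0 < s → |α| - s / 2 ≤ γ * ψ s / s := by
        intro s hs
        have h1 := hp s
        have h2 := hp (-s)
        rw [heven] at h2
        rw [hzero] at h1 h2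
        have hb : |α| * s - s ^ 2 / 2 ≤ γ * ψ s := by
          rcases abs_cases α with ⟨he, _⟩ | ⟨he, _⟩ <;> rw [he] <;> nlinarith
        rw [le_div_iff₀ hs]
        nlinarith
      have hlim1 : Filter.Tendsto (fun s : ℝ => |α| - s / 2)
          (nhdsWithin 0 (Set.Ioi 0)) (nhds (|α|)) := by
        have : Filter.Tendsto (fun s : ℝ => |α| - s / 2) (nhds 0) (nhds (|α| - 0 / 2)) :=
          (tendsto_const_nhds.sub ((continuous_id.div_const 2).tendsto 0))
        simpa using this.mono_left nhdsWithin_le_nhds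
      have hlim2 : Filter.Tendsto (fun s : ℝ => γ * ψ s / s)
          (nhdsWithin 0 (Set.Ioi 0)) (nhds (γ * d)) := by
        have := hd.const_mul γ
        refine this.congr' ?_
        filter_upwards [self_mem_nhdsWithin] with s hs
        field_simp
      have : |α| ≤ γ * d := by
        refine le_of_tendsto_of_tendsto hlim1 hlim2 ?_
        filter_upwards [self_mem_nhdsWithin] with s hs using key s hs
      linarith
    have habsα : 0 < |α| := lt_trans (by positivity) hgt
    -- sign claims
    have hsign_pos : 0 < α → 0 < p := by
      intro hα
      rcases lt_trichotomy p 0 with h | h | h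
      · exfalso
        have := hp (-p)
        rw [heven] at this
        nlinarith
      · exact absurd h hne
      · exact h
    have hsign_neg : α < 0 → p < 0 := by
      intro hα
      rcases lt_trichotomy p 0 with h | h | h
      · exact h
      · exact absurd h hne
      · exfalso
        have := hp (-p)
        rw [heven] at this
        nlinarith
    refine ⟨hne, hsign_pos, hsign_neg, ?_⟩
    -- stationarity
    have hder : HasDerivAt (fun t => γ * ψ t + (α - t) ^ 2 / 2)
        (γ * ψ' p + (2 * (α - p) ^ 1 * (0 - 1)) / 2) p := by
      exact ((hdiff p hne).const_mul γ).add
        ((((hasDerivAt_const p α).sub (hasDerivAt_id p)).pow 2).div_const 2)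
    have hmin : IsLocalMin (fun t => γ * ψ t + (α - t) ^ 2 / 2) p :=
      Filter.Eventually.of_forall hp
    have := hmin.hasDerivAt_eq_zero hder
    have : γ * ψ' p + (2 * (α - p) ^ 1 * (0 - 1)) / 2 = 0 := this
    nlinarith [this]
end
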